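/- For 2 < p < ∞ and n ≥ 2, the unit vector e₁ in ℓ_p^n does not admit an outer ellipsoid: there is no inner-product norm |·| on ℝⁿ with |z| ≤ ‖z‖_p for all z and |e₁| = 1. -/

import Mathlib

open scoped ENNReal

/-- For `2 < p < ∞` and `n ≥ 2`, the unit vector `e₁` of `ℓ_p^n` admits no outer ellipsoid:
there is no inner-product norm (symmetric positive-definite bilinear form `B`) with
`√(B z z) ≤ ‖z‖_p` for all `z` and `B e₁ e₁ = 1`. -/
theorem stmt9 (n : ℕ) (hn : 2 ≤ n) (p : ℝ≥0∞) [Fact (1 ≤ p)] (hp : 2 < p) (hp' : p ≠ ⊤) :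
    ¬ ∃ B : LinearMap.BilinForm ℝ (PiLp p (fun _ : Fin n => ℝ)),
        (∀ z w, B z w = B w z) ∧
        (∀ z : PiLp p (fun _ : Fin n => ℝ), z ≠ 0 → 0 < B z z) ∧
        (∀ z : PiLp p (fun _ : Fin n => ℝ), B z z ≤ ‖z‖ ^ 2) ∧
        B ((WithLp.equiv p (Fin n → ℝ)).symm (Pi.single (⟨0, by omega⟩ : Fin n) 1))
          ((WithLp.equiv p (Fin n → ℝ)).symm (Pi.single (⟨0, by omega⟩ : Fin n) 1)) = 1 := by
  rintro ⟨B, hsymm, hpos, hle, hB1⟩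
  set q := p.toReal with hq_def
  have hq2 : 2 < q := by
    have := ENNReal.toReal_strict_mono hp' hp
    simpa using this
  have hq0 : 0 < q := by linarith
  have i0 : Fin n := ⟨0, by omega⟩
  have i1lt : 1 < n := by omega
  set e1 : PiLp p (fun _ : Fin n => ℝ) :=
    (WithLp.equiv p (Fin n → ℝ)).symm (Pi.single (⟨0, by omega⟩ : Fin n) 1) with he1
  set e2 : PiLp p (fun _ : Fin n => ℝ) :=
    (WithLp.equiv p (Fin n → ℝ)).symm (Pi.single (⟨1, by omega⟩ : Fin n) 1) with he2
  have hii : (⟨0, by omega⟩ : Fin n) ≠ (⟨1, by omega⟩ : Fin n) := by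
    simp [Fin.ext_iff]
  have hB1' : B e1 e1 = 1 := hB1
  have he2ne : e2 ≠ 0 := by
    intro h
    have h1 : e2 (⟨1, by omega⟩ : Fin n) = 0 := by rw [h]; rfl
    simp [he2, WithLp.equiv_symm_apply, PiLp.toLp_apply] at h1
  have hc : 0 < B e2 e2 := hpos e2 he2ne
  set c := B e2 e2 with hcdef
  -- norm bound
  have hnorm : ∀ s : ℝ, ‖e1 + s • e2‖ ^ 2 ≤ 1 + |s| ^ q := by
    intro s
    have hx : ∀ i, (e1 + s • e2) i
        = (Pi.single (⟨0, by omega⟩ : Fin n) (1:ℝ) : Fin n → ℝ) i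
          + s * (Pi.single (⟨1, by omega⟩ : Fin n) (1:ℝ) : Fin n → ℝ) i := by
      intro i
      rw [he1, he2]
      rfl
    have hsum : ∑ i, ‖(e1 + s • e2) i‖ ^ q = 1 + |s| ^ q := by
      rw [← Finset.sum_subset
          (Finset.subset_univ ({⟨0, by omega⟩, ⟨1, by omega⟩} : Finset (Fin n)))]
      · rw [Finset.sum_pair hii]
        rw [hx, hx, Pi.single_eq_same, Pi.single_eq_same,
          Pi.single_eq_of_ne hii, Pi.single_eq_of_ne hii.symm]
        simp [Real.norm_eq_abs, Real.one_rpow, abs_mul]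
      · intro i _ hi
        simp only [Finset.mem_insert, Finset.mem_singleton, not_or] at hi
        rw [hx, Pi.single_eq_of_ne hi.1, Pi.single_eq_of_ne hi.2]
        simp [Real.zero_rpow hq0.ne']
    have hn1 : ‖e1 + s • e2‖ = (1 + |s| ^ q) ^ (1/q) := by
      rw [PiLp.norm_eq_sum hq0, hsum]
    have hbase : (1:ℝ) ≤ 1 + |s| ^ q :=
      le_add_of_nonneg_right (Real.rpow_nonneg (abs_nonneg s) q)
    have hbase0 : (0:ℝ) ≤ 1 + |s| ^ q := by linarith
    rw [hn1, ← Real.rpow_natCast ((1 + |s| ^ q) ^ (1/q)) 2, ← Real.rpow_mul hbase0]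
    calc (1 + |s| ^ q) ^ (1/q * (2:ℕ)) ≤ (1 + |s| ^ q) ^ (1:ℝ) := by
          apply Real.rpow_le_rpow_of_exponent_le hbase
          push_cast
          rw [div_mul_eq_mul_div, one_mul, div_le_one hq0]
          linarith
      _ = 1 + |s| ^ q := Real.rpow_one _
  -- expansion of the quadratic form
  have expand : ∀ s : ℝ, B (e1 + s • e2) (e1 + s • e2)
      = 1 + 2 * s * B e1 e2 + s ^ 2 * c := by
    intro s
    have hsy := hsymm e2 e1
    simp only [map_add, map_smul, LinearMap.add_apply, LinearMap.smul_apply,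
      smul_eq_mul, hB1', hcdef]
    rw [hsy]; ring
  -- key inequality: c * t^2 ≤ t^q for all t > 0
  have key : ∀ t : ℝ, 0 < t → c * t ^ 2 ≤ t ^ q := by
    intro t ht
    have h1 := (expand t ▸ hle (e1 + t • e2)).trans (hnorm t)
    have h2 := (expand (-t) ▸ hle (e1 + (-t) • e2)).trans (hnorm (-t))
    rw [abs_of_pos ht] at h1
    rw [abs_neg, abs_of_pos ht] at h2
    nlinarith [h1, h2]
  -- choose t small
  set t : ℝ := (c/2) ^ (1/(q-2)) with htdef
  have ht : 0 < t := Real.rpow_pos_of_pos (by positivity) _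
  have htq : t ^ q = (c/2) * t ^ 2 := by
    have : q = (q - 2) + 2 := by ring
    rw [this, Real.rpow_add ht]
    have h1 : t ^ (q - 2) = c / 2 := by
      rw [htdef, ← Real.rpow_mul (by positivity), one_div_mul_cancel (by linarith : q - 2 ≠ 0),
        Real.rpow_one]
    rw [h1, ← Real.rpow_natCast t 2]
    norm_num
  have := key t ht
  rw [htq] at this
  nlinarith [sq_nonneg t, pow_pos ht 2]
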